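/- arXiv:2006.05317 — 5 statements merged into one kernel-verified Lean document; each statement's English description precedes it below -/
import Mathlib

section
/- The vector fields on ℝ^5, X = ∂ₓ − (y/2)∂_z − (z/2 + xy/12)∂_v − (y²/12)∂_w and Y = ∂_y + (x/2)∂_z + (x²/12)∂_v + (xy/12 − z/2)∂_w, satisfy: the Lie bracket [X,Y] equals Z = ∂_z + (x/2)∂_v + (y/2)∂_w, [X,Z] = ∂_v, [Y,Z] = ∂_w, and [X,∂_v] = [X,∂_w] = [Y,∂_v] = [Y,∂_w] = [∂_v,∂_w] = 0. -/
/-- Lie bracket of vector fields on ℝ⁵ ≅ ℝ×ℝ×ℝ×ℝ×ℝ :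
`[A,B](p) = DB(p)·A(p) − DA(p)·B(p)`. -/
noncomputable def vfBracket (A B : ℝ × ℝ × ℝ × ℝ × ℝ → ℝ × ℝ × ℝ × ℝ × ℝ) :
    ℝ × ℝ × ℝ × ℝ × ℝ → ℝ × ℝ × ℝ × ℝ × ℝ :=
  fun p => fderiv ℝ B p (A p) - fderiv ℝ A p (B p)

/-- The left-invariant vector field X on the Cartan group in coordinates of the
first kind. -/
noncomputable def cartanX : ℝ × ℝ × ℝ × ℝ × ℝ → ℝ × ℝ × ℝ × ℝ × ℝ :=
  fun p =>
    match p with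
    | (x, y, z, _, _) => (1, 0, -(y / 2), -(z / 2 + x * y / 12), -(y ^ 2 / 12))

/-- The left-invariant vector field Y. -/
noncomputable def cartanY : ℝ × ℝ × ℝ × ℝ × ℝ → ℝ × ℝ × ℝ × ℝ × ℝ :=
  fun p =>
    match p with
    | (x, y, z, _, _) => (0, 1, x / 2, x ^ 2 / 12, x * y / 12 - z / 2)

/-- The left-invariant vector field Z. -/
noncomputable def cartanZ : ℝ × ℝ × ℝ × ℝ × ℝ → ℝ × ℝ × ℝ × ℝ × ℝ :=
  fun p =>
    match p with
    | (x, y, _, _, _) => (0, 0, 1, x / 2, y / 2)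

/-- The coordinate vector field ∂ᵥ. -/
noncomputable def cartanV : ℝ × ℝ × ℝ × ℝ × ℝ → ℝ × ℝ × ℝ × ℝ × ℝ := fun _ => (0, 0, 0, 1, 0)

/-- The coordinate vector field ∂_w. -/
noncomputable def cartanW : ℝ × ℝ × ℝ × ℝ × ℝ → ℝ × ℝ × ℝ × ℝ × ℝ := fun _ => (0, 0, 0, 0, 1)

section aux

open ContinuousLinearMap

local notation "E5" => (ℝ × ℝ × ℝ × ℝ × ℝ)

private lemma fderivX_apply (p v : E5) :
    fderiv ℝ cartanX p v = (0, 0, -(v.2.1 / 2),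
      -(v.2.2.1 / 2 + (v.1 * p.2.1 + p.1 * v.2.1) / 12), -(p.2.1 * v.2.1 / 6)) := by
  have hx : HasFDerivAt (fun q : E5 => q.1) (fst ℝ ℝ (ℝ×ℝ×ℝ×ℝ)) p := hasFDerivAt_fst
  have hs : HasFDerivAt (fun q : E5 => q.2) (snd ℝ ℝ (ℝ×ℝ×ℝ×ℝ)) p := hasFDerivAt_snd
  have hy : HasFDerivAt (fun q : E5 => q.2.1)
      ((fst ℝ ℝ (ℝ×ℝ×ℝ)).comp (snd ℝ ℝ (ℝ×ℝ×ℝ×ℝ))) p := hasFDerivAt_fst.comp p hs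
  have hs2 : HasFDerivAt (fun q : E5 => q.2.2)
      ((snd ℝ ℝ (ℝ×ℝ×ℝ)).comp (snd ℝ ℝ (ℝ×ℝ×ℝ×ℝ))) p := hasFDerivAt_snd.comp p hs
  have hz := hs2.fst
  have h1 := hasFDerivAt_const (𝕜 := ℝ) (1:ℝ) p
  have h2 := hasFDerivAt_const (𝕜 := ℝ) (0:ℝ) p
  have h3 := (hy.mul_const (2⁻¹:ℝ)).neg
  have h4 := ((hz.mul_const (2⁻¹:ℝ)).add ((hx.mul hy).mul_const (12⁻¹:ℝ))).neg
  have h5 := ((hy.mul hy).mul_const (12⁻¹:ℝ)).neg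
  have ex : cartanX = fun q : E5 =>
      ((1:ℝ), (0:ℝ), -(q.2.1 * 2⁻¹), -(q.2.2.1 * 2⁻¹ + q.1 * q.2.1 * 12⁻¹),
        -(q.2.1 * q.2.1 * 12⁻¹)) := by
    funext q
    obtain ⟨x, y, z, v, w⟩ := q
    simp only [cartanX, Prod.mk.injEq]
    refine ⟨trivial, trivial, by ring, by ring, by ring⟩
  have hX := h1.prodMk (h2.prodMk (h3.prodMk (h4.prodMk h5)))
  change HasFDerivAt (fun q : E5 =>
      ((1:ℝ), (0:ℝ), -(q.2.1 * 2⁻¹), -(q.2.2.1 * 2⁻¹ + q.1 * q.2.1 * 12⁻¹),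
        -(q.2.1 * q.2.1 * 12⁻¹))) _ p at hX
  rw [← ex] at hX
  rw [hX.fderiv]
  simp only [prod_apply, zero_apply, neg_apply, add_apply, coe_comp', Function.comp_apply,
    coe_fst', coe_snd', ContinuousLinearMap.smul_apply, smul_eq_mul,
    ContinuousLinearMap.add_apply, ContinuousLinearMap.sub_apply, Prod.mk.injEq]
  refine ⟨trivial, trivial, by ring, by ring, by ring⟩

private lemma fderivY_apply (p v : E5) :
    fderiv ℝ cartanY p v = (0, 0, v.1 / 2, p.1 * v.1 / 6,
      (v.1 * p.2.1 + p.1 * v.2.1) / 12 - v.2.2.1 / 2) := by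
  have hx : HasFDerivAt (fun q : E5 => q.1) (fst ℝ ℝ (ℝ×ℝ×ℝ×ℝ)) p := hasFDerivAt_fst
  have hs : HasFDerivAt (fun q : E5 => q.2) (snd ℝ ℝ (ℝ×ℝ×ℝ×ℝ)) p := hasFDerivAt_snd
  have hy : HasFDerivAt (fun q : E5 => q.2.1)
      ((fst ℝ ℝ (ℝ×ℝ×ℝ)).comp (snd ℝ ℝ (ℝ×ℝ×ℝ×ℝ))) p := hasFDerivAt_fst.comp p hs
  have hs2 : HasFDerivAt (fun q : E5 => q.2.2)
      ((snd ℝ ℝ (ℝ×ℝ×ℝ)).comp (snd ℝ ℝ (ℝ×ℝ×ℝ×ℝ))) p := hasFDerivAt_snd.comp p hs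
  have hz := hs2.fst
  have h1 := hasFDerivAt_const (𝕜 := ℝ) (0:ℝ) p
  have h2 := hasFDerivAt_const (𝕜 := ℝ) (1:ℝ) p
  have h3 := hx.mul_const (2⁻¹:ℝ)
  have h4 := (hx.mul hx).mul_const (12⁻¹:ℝ)
  have h5 := ((hx.mul hy).mul_const (12⁻¹:ℝ)).sub (hz.mul_const (2⁻¹:ℝ))
  have ex : cartanY = fun q : E5 =>
      ((0:ℝ), (1:ℝ), q.1 * 2⁻¹, q.1 * q.1 * 12⁻¹, q.1 * q.2.1 * 12⁻¹ - q.2.2.1 * 2⁻¹) := by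
    funext q
    obtain ⟨x, y, z, v, w⟩ := q
    simp only [cartanY, Prod.mk.injEq]
    refine ⟨trivial, trivial, by ring, by ring, by ring⟩
  have hY := h1.prodMk (h2.prodMk (h3.prodMk (h4.prodMk h5)))
  change HasFDerivAt (fun q : E5 =>
      ((0:ℝ), (1:ℝ), q.1 * 2⁻¹, q.1 * q.1 * 12⁻¹, q.1 * q.2.1 * 12⁻¹ - q.2.2.1 * 2⁻¹)) _ p at hY
  rw [← ex] at hY
  rw [hY.fderiv]
  simp only [prod_apply, zero_apply, neg_apply, add_apply, coe_comp', Function.comp_apply,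
    coe_fst', coe_snd', ContinuousLinearMap.smul_apply, smul_eq_mul,
    ContinuousLinearMap.add_apply, ContinuousLinearMap.sub_apply, Prod.mk.injEq]
  refine ⟨trivial, trivial, by ring, by ring, by ring⟩

private lemma fderivZ_apply (p v : E5) :
    fderiv ℝ cartanZ p v = (0, 0, 0, v.1 / 2, v.2.1 / 2) := by
  have hx : HasFDerivAt (fun q : E5 => q.1) (fst ℝ ℝ (ℝ×ℝ×ℝ×ℝ)) p := hasFDerivAt_fst
  have hs : HasFDerivAt (fun q : E5 => q.2) (snd ℝ ℝ (ℝ×ℝ×ℝ×ℝ)) p := hasFDerivAt_snd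
  have hy : HasFDerivAt (fun q : E5 => q.2.1)
      ((fst ℝ ℝ (ℝ×ℝ×ℝ)).comp (snd ℝ ℝ (ℝ×ℝ×ℝ×ℝ))) p := hasFDerivAt_fst.comp p hs
  have h1 := hasFDerivAt_const (𝕜 := ℝ) (0:ℝ) p
  have h2 := hasFDerivAt_const (𝕜 := ℝ) (0:ℝ) p
  have h3 := hasFDerivAt_const (𝕜 := ℝ) (1:ℝ) p
  have h4 := hx.mul_const (2⁻¹:ℝ)
  have h5 := hy.mul_const (2⁻¹:ℝ)
  have ex : cartanZ = fun q : E5 =>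
      ((0:ℝ), (0:ℝ), (1:ℝ), q.1 * 2⁻¹, q.2.1 * 2⁻¹) := by
    funext q
    obtain ⟨x, y, z, v, w⟩ := q
    simp only [cartanZ, Prod.mk.injEq]
    refine ⟨trivial, trivial, trivial, by ring, by ring⟩
  have hZ := h1.prodMk (h2.prodMk (h3.prodMk (h4.prodMk h5)))
  rw [← ex] at hZ
  rw [hZ.fderiv]
  simp only [prod_apply, zero_apply, coe_comp', Function.comp_apply,
    coe_fst', coe_snd', ContinuousLinearMap.smul_apply, smul_eq_mul,
    ContinuousLinearMap.add_apply, Prod.mk.injEq]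
  refine ⟨trivial, trivial, trivial, by ring, by ring⟩

private lemma fderivV_apply (p v : E5) : fderiv ℝ cartanV p v = 0 := by
  have h : HasFDerivAt cartanV (0 : E5 →L[ℝ] E5) p :=
    hasFDerivAt_const (𝕜 := ℝ) ((0:ℝ), (0:ℝ), (0:ℝ), (1:ℝ), (0:ℝ)) p
  rw [h.fderiv]; rfl

private lemma fderivW_apply (p v : E5) : fderiv ℝ cartanW p v = 0 := by
  have h : HasFDerivAt cartanW (0 : E5 →L[ℝ] E5) p :=
    hasFDerivAt_const (𝕜 := ℝ) ((0:ℝ), (0:ℝ), (0:ℝ), (0:ℝ), (1:ℝ)) p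
  rw [h.fderiv]; rfl

end aux

theorem cartan_vector_fields_brackets :
    vfBracket cartanX cartanY = cartanZ ∧
    vfBracket cartanX cartanZ = cartanV ∧
    vfBracket cartanY cartanZ = cartanW ∧
    vfBracket cartanX cartanV = 0 ∧
    vfBracket cartanX cartanW = 0 ∧
    vfBracket cartanY cartanV = 0 ∧
    vfBracket cartanY cartanW = 0 ∧
    vfBracket cartanV cartanW = 0 := by
  refine ⟨?_, ?_, ?_, ?_, ?_, ?_, ?_, ?_⟩ <;>
  · funext p
    obtain ⟨x, y, z, v, w⟩ := p
    simp only [vfBracket, fderivX_apply, fderivY_apply, fderivZ_apply, fderivV_apply,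
      fderivW_apply, cartanX, cartanY, cartanZ, cartanV, cartanW, Pi.zero_apply,
      Prod.mk_sub_mk, sub_zero, zero_sub, Prod.neg_mk, neg_zero, Prod.mk.injEq, Prod.ext_iff,
      Prod.fst_zero, Prod.snd_zero]
    all_goals constructorm* _ ∧ _
    all_goals first | ring | norm_num
end

section
/- Let u₁,u₂ be bounded measurable, x,y,z Lipschitz with x(0)=y(0)=z(0)=v(0)=0, x'=u₁, y'=u₂, z'=½(xu₂−yu₁) a.e., and v Lipschitz with v(0)=0 and v' = −½(z + xy/6)u₁ + (x²/12)u₂ a.e. Then v(t) = (1/12)x(t)²y(t) − ½ x(t)∫₀ᵗ x u₂ dτ + ½∫₀ᵗ x² u₂ dτ for all t. -/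
open MeasureTheory intervalIntegral Filter Set Topology

/-- Local Lipschitz predicate on compact intervals, with real constants. -/
def LocLip (f : ℝ → ℝ) : Prop :=
  ∀ a b : ℝ, ∃ C : ℝ, ∀ s ∈ Set.Icc a b, ∀ t ∈ Set.Icc a b, |f s - f t| ≤ C * |s - t|

theorem LocLip.of_lip {f : ℝ → ℝ} {K : NNReal} (h : LipschitzWith K f) : LocLip f :=
  fun _ _ => ⟨K, fun s _ t _ => by simpa [Real.dist_eq] using h.dist_le_mul s t⟩

theorem LocLip.add {f g : ℝ → ℝ} (hf : LocLip f) (hg : LocLip g) :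
    LocLip (fun t => f t + g t) := by
  intro a b
  obtain ⟨C, hC⟩ := hf a b
  obtain ⟨D, hD⟩ := hg a b
  refine ⟨C + D, fun s hs t ht => ?_⟩
  have h1 := hC s hs t ht
  have h2 := hD s hs t ht
  have e : f s + g s - (f t + g t) = (f s - f t) + (g s - g t) := by ring
  rw [e]
  calc |(f s - f t) + (g s - g t)| ≤ |f s - f t| + |g s - g t| := abs_add_le _ _
    _ ≤ (C + D) * |s - t| := by linarith

theorem LocLip.bddIcc {f : ℝ → ℝ} (hf : LocLip f) (a b : ℝ) :
    ∃ M : ℝ, ∀ s ∈ Set.Icc a b, |f s| ≤ M := by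
  obtain ⟨C, hC⟩ := hf a b
  by_cases hab : a ≤ b
  · refine ⟨|f a| + |C| * |b - a|, fun s hs => ?_⟩
    have h1 := hC s hs a ⟨le_refl a, hab⟩
    have h2 : |f s| - |f a| ≤ |f s - f a| := abs_sub_abs_le_abs_sub _ _
    have h3 : |s - a| ≤ |b - a| := by
      rw [abs_of_nonneg (by linarith [hs.1] : (0:ℝ) ≤ s - a),
        abs_of_nonneg (by linarith : (0:ℝ) ≤ b - a)]
      linarith [hs.2]
    have h4 : C * |s - a| ≤ |C| * |b - a| :=
      mul_le_mul (le_abs_self C) h3 (abs_nonneg _) (abs_nonneg _)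
    linarith
  · exact ⟨0, fun s hs => absurd (hs.1.trans hs.2) hab⟩

theorem LocLip.mul {f g : ℝ → ℝ} (hf : LocLip f) (hg : LocLip g) :
    LocLip (fun t => f t * g t) := by
  intro a b
  obtain ⟨C, hC⟩ := hf a b
  obtain ⟨D, hD⟩ := hg a b
  obtain ⟨M, hM⟩ := hf.bddIcc a b
  obtain ⟨N, hN⟩ := hg.bddIcc a b
  refine ⟨M * D + N * C, fun s hs t ht => ?_⟩
  have e : f s * g s - f t * g t = f s * (g s - g t) + g t * (f s - f t) := by ring
  rw [e]
  have h1 := hC s hs t ht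
  have h2 := hD s hs t ht
  have h3 := hM s hs
  have h4 := hN t ht
  have h5 : |f s * (g s - g t)| ≤ M * (D * |s - t|) := by
    rw [abs_mul]
    exact mul_le_mul h3 h2 (abs_nonneg _) ((abs_nonneg _).trans h3)
  have h6 : |g t * (f s - f t)| ≤ N * (C * |s - t|) := by
    rw [abs_mul]
    exact mul_le_mul h4 h1 (abs_nonneg _) ((abs_nonneg _).trans h4)
  calc |f s * (g s - g t) + g t * (f s - f t)|
      ≤ |f s * (g s - g t)| + |g t * (f s - f t)| := abs_add_le _ _
    _ ≤ (M * D + N * C) * |s - t| := by linarith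

theorem LocLip.div_const {f : ℝ → ℝ} (hf : LocLip f) (c : ℝ) :
    LocLip (fun t => f t / c) := by
  by_cases hc : c = 0
  · exact fun a b => ⟨0, fun s _ t _ => by simp [hc]⟩
  intro a b
  obtain ⟨C, hC⟩ := hf a b
  refine ⟨C / |c|, fun s hs t ht => ?_⟩
  rw [div_sub_div_same, abs_div]
  rw [div_mul_eq_mul_div]
  gcongr
  exact hC s hs t ht

/-- FTC for locally Lipschitz functions with an a.e. derivative. -/
theorem ftc_locLip (f g : ℝ → ℝ) (hf : Continuous f) (hlip : LocLip f)
    (hd : ∀ᵐ t ∂(volume : Measure ℝ), HasDerivAt f (g t) t) :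
    ∀ a b : ℝ, ∫ t in a..b, g t = f b - f a := by
  -- sequence of step sizes
  set h : ℕ → ℝ := fun n => 1 / (n + 1) with hh
  have hpos : ∀ n, 0 < h n := fun n => by positivity
  have hle1 : ∀ n, h n ≤ 1 := fun n => by
    rw [hh]
    rw [div_le_one (by positivity)]
    simp
  have htend : Tendsto h atTop (𝓝 0) := tendsto_one_div_add_atTop_nhds_zero_nat
  -- slope along the sequence
  have slope_seq : ∀ (F : ℝ → ℝ) (c L : ℝ), HasDerivAt F L c →
      Tendsto (fun n => (F (c + h n) - F c) / h n) atTop (𝓝 L) := by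
    intro F c L hF
    have hs := hasDerivAt_iff_tendsto_slope.mp hF
    have hseq : Tendsto (fun n => c + h n) atTop (𝓝[≠] c) := by
      apply tendsto_nhdsWithin_of_tendsto_nhds_of_eventually_within
      · simpa using tendsto_const_nhds.add htend
      · exact Eventually.of_forall fun n => by
          simp only [mem_compl_iff, mem_singleton_iff]
          have := hpos n; intro hcon; nlinarith [hcon]
    have := hs.comp hseq
    convert this using 2 with n
    simp [slope_def_field]
  have main : ∀ a b : ℝ, a ≤ b → ∫ t in a..b, g t = f b - f a := by
    intro a b hab
    obtain ⟨C, hC⟩ := hlip a (b + 1)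
    have hint : ∀ c d : ℝ, IntervalIntegrable f volume c d := fun c d =>
      hf.intervalIntegrable c d
    -- Key 1: rewrite integral of difference quotient
    have key1 : ∀ n, (∫ t in a..b, (f (t + h n) - f t) / h n)
        = ((∫ t in b..(b + h n), f t) - ∫ t in a..(a + h n), f t) / h n := by
      intro n
      have hshift : IntervalIntegrable (fun t => f (t + h n)) volume a b :=
        (hf.comp (continuous_id.add continuous_const)).intervalIntegrable a b
      rw [intervalIntegral.integral_div]
      congr 1
      rw [intervalIntegral.integral_sub hshift (hint a b)]
      rw [intervalIntegral.integral_comp_add_right]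
      have e1 : (∫ t in a..(b + h n), f t)
          = (∫ t in a..b, f t) + ∫ t in b..(b + h n), f t :=
        (intervalIntegral.integral_add_adjacent_intervals (hint a b) (hint b _)).symm
      have e2 : (∫ t in a..(b + h n), f t)
          = (∫ t in a..(a + h n), f t) + ∫ t in (a + h n)..(b + h n), f t :=
        (intervalIntegral.integral_add_adjacent_intervals (hint a _) (hint _ _)).symm
      linarith
    -- Key 2: endpoint limits via FTC-1 for continuous functions
    have key2 : ∀ c : ℝ, Tendsto (fun n => (∫ t in c..(c + h n), f t) / h n)
        atTop (𝓝 (f c)) := by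
      intro c
      have hF : HasDerivAt (fun u => ∫ t in c..u, f t) (f c) c :=
        intervalIntegral.integral_hasDerivAt_right (hint c c)
          (hf.stronglyMeasurableAtFilter volume (𝓝 c)) hf.continuousAt
      have := slope_seq _ c (f c) hF
      convert this using 2 with n
      simp
    -- DCT
    have key3 : Tendsto (fun n => ∫ t in a..b, (f (t + h n) - f t) / h n)
        atTop (𝓝 (∫ t in a..b, g t)) := by
      have hioc : ∀ (φ : ℝ → ℝ), (∫ t in a..b, φ t) = ∫ t in Set.Ioc a b, φ t :=
        fun φ => intervalIntegral.integral_of_le hab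
      simp only [hioc]
      apply MeasureTheory.tendsto_integral_of_dominated_convergence (fun _ => C)
      · intro n
        exact (((hf.comp (continuous_id.add continuous_const)).sub hf).div_const
          (h n)).aestronglyMeasurable.restrict
      · exact integrableOn_const measure_Ioc_lt_top.ne (by simp)
      · intro n
        filter_upwards [ae_restrict_mem measurableSet_Ioc] with t ht
        have ht1 : t ∈ Set.Icc a (b + 1) := ⟨ht.1.le, by linarith [ht.2]⟩
        have ht2 : t + h n ∈ Set.Icc a (b + 1) :=
          ⟨by linarith [ht.1.le, (hpos n).le], by linarith [ht.2, hle1 n]⟩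
        have hb := hC (t + h n) ht2 t ht1
        have : |t + h n - t| = h n := by
          rw [add_sub_cancel_left, abs_of_pos (hpos n)]
        rw [this] at hb
        rw [Real.norm_eq_abs, abs_div, abs_of_pos (hpos n), div_le_iff₀ (hpos n)]
        exact hb
      · filter_upwards [ae_restrict_of_ae hd] with t ht
        exact slope_seq f t (g t) ht
    -- combine
    have key4 : Tendsto (fun n => ∫ t in a..b, (f (t + h n) - f t) / h n)
        atTop (𝓝 (f b - f a)) := by
      have e : (fun n => ∫ t in a..b, (f (t + h n) - f t) / h n)
          = fun n => ((∫ t in b..(b + h n), f t) - ∫ t in a..(a + h n), f t) / h n :=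
        funext key1
      rw [e]
      simp only [sub_div]
      exact (key2 b).sub (key2 a)
    exact tendsto_nhds_unique key3 key4
  intro a b
  rcases le_total a b with hab | hab
  · exact main a b hab
  · rw [intervalIntegral.integral_symm, main b a hab]; ring
theorem cartan_v_formula
    (u₁ u₂ x y z v : ℝ → ℝ)
    (hu₁m : Measurable u₁) (hu₂m : Measurable u₂)
    (hu₁b : ∃ C, ∀ t, |u₁ t| ≤ C) (hu₂b : ∃ C, ∀ t, |u₂ t| ≤ C)
    (hx : ∃ K, LipschitzWith K x) (hy : ∃ K, LipschitzWith K y)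
    (hz : ∃ K, LipschitzWith K z) (hv : ∃ K, LipschitzWith K v)
    (hx0 : x 0 = 0) (hy0 : y 0 = 0) (hz0 : z 0 = 0) (hv0 : v 0 = 0)
    (hx' : ∀ᵐ t ∂(volume : Measure ℝ), HasDerivAt x (u₁ t) t)
    (hy' : ∀ᵐ t ∂(volume : Measure ℝ), HasDerivAt y (u₂ t) t)
    (hz' : ∀ᵐ t ∂(volume : Measure ℝ),
      HasDerivAt z ((x t * u₂ t - y t * u₁ t) / 2) t)
    (hv' : ∀ᵐ t ∂(volume : Measure ℝ),
      HasDerivAt v (-(z t + x t * y t / 6) * u₁ t / 2 + x t ^ 2 / 12 * u₂ t) t) :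
    ∀ t : ℝ, v t = x t ^ 2 * y t / 12 - x t * (∫ τ in (0:ℝ)..t, x τ * u₂ τ) / 2
      + (∫ τ in (0:ℝ)..t, x τ ^ 2 * u₂ τ) / 2 := by
  obtain ⟨Kx, hKx⟩ := hx
  obtain ⟨Ky, hKy⟩ := hy
  obtain ⟨Kz, hKz⟩ := hz
  obtain ⟨Kv, hKv⟩ := hv
  have lx := LocLip.of_lip hKx
  have ly := LocLip.of_lip hKy
  have lz := LocLip.of_lip hKz
  have lv := LocLip.of_lip hKv
  have lconst : LocLip (fun _ => (2:ℝ)) := LocLip.of_lip (LipschitzWith.const 2)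
  have cx := hKx.continuous
  have cy := hKy.continuous
  have cz := hKz.continuous
  have cv := hKv.continuous
  -- first application: f₁ = z + x*y/2
  have llf₁ : LocLip (fun t => z t + x t * y t / 2) := lz.add ((lx.mul ly).div_const 2)
  have cf₁ : Continuous (fun t => z t + x t * y t / 2) :=
    cz.add ((cx.mul cy).div_const 2)
  have hd₁ : ∀ᵐ t ∂(volume : Measure ℝ),
      HasDerivAt (fun s => z s + x s * y s / 2) (x t * u₂ t) t := by
    filter_upwards [hx', hy', hz'] with t htx hty htz
    have H := htz.add ((htx.mul hty).div_const 2)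
    have e : (x t * u₂ t - y t * u₁ t) / 2 + (u₁ t * y t + x t * u₂ t) / 2
        = x t * u₂ t := by ring
    exact e ▸ H
  have I₁ : ∀ t : ℝ, (∫ τ in (0:ℝ)..t, x τ * u₂ τ) = z t + x t * y t / 2 := by
    intro t
    have := ftc_locLip _ _ cf₁ llf₁ hd₁ 0 t
    rw [this, hx0, hz0]
    ring
  -- second application: f₂ = 2v + x*x*y/3 + x*z
  have llf₂ : LocLip (fun t => 2 * v t + x t * x t * y t / 3 + x t * z t) :=
    ((lconst.mul lv).add (((lx.mul lx).mul ly).div_const 3)).add (lx.mul lz)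
  have cf₂ : Continuous (fun t => 2 * v t + x t * x t * y t / 3 + x t * z t) :=
    ((continuous_const.mul cv).add (((cx.mul cx).mul cy).div_const 3)).add (cx.mul cz)
  have hd₂ : ∀ᵐ t ∂(volume : Measure ℝ),
      HasDerivAt (fun s => 2 * v s + x s * x s * y s / 3 + x s * z s)
        (x t ^ 2 * u₂ t) t := by
    filter_upwards [hx', hy', hz', hv'] with t htx hty htz htv
    have H := ((htv.const_mul 2).add (((htx.mul htx).mul hty).div_const 3)).add
      (htx.mul htz)
    have e : 2 * (-(z t + x t * y t / 6) * u₁ t / 2 + x t ^ 2 / 12 * u₂ t)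
        + ((u₁ t * x t + x t * u₁ t) * y t + x t * x t * u₂ t) / 3
        + (u₁ t * z t + x t * ((x t * u₂ t - y t * u₁ t) / 2))
        = x t ^ 2 * u₂ t := by ring
    exact e ▸ H
  have I₂ : ∀ t : ℝ, (∫ τ in (0:ℝ)..t, x τ ^ 2 * u₂ τ)
      = 2 * v t + x t * x t * y t / 3 + x t * z t := by
    intro t
    have := ftc_locLip _ _ cf₂ llf₂ hd₂ 0 t
    rw [this, hx0, hv0]
    ring
  intro t
  rw [I₁ t, I₂ t]
  ring
end

section
/- Let u₁,u₂ be bounded measurable, x,y,z,w Lipschitz with x(0)=y(0)=z(0)=w(0)=0, x'=u₁, y'=u₂, z'=½(xu₂−yu₁) a.e., and w' = −(y²/12)u₁ − ½(z − xy/6)u₂ a.e. Then w(t) = −(1/12)x(t)y(t)² − ½ y(t)∫₀ᵗ x u₂ dτ + ∫₀ᵗ x y u₂ dτ for all t. -/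
open MeasureTheory intervalIntegral Set Filter Topology

lemma slope_seq_tendsto {f : ℝ → ℝ} {c t : ℝ} (hd : HasDerivAt f c t) :
    Tendsto (fun n : ℕ => (f (t + 1/(n+1:ℝ)) - f t) / (1/(n+1:ℝ))) atTop (𝓝 c) := by
  have hs := hasDerivAt_iff_tendsto_slope.mp hd
  have h1 : Tendsto (fun n : ℕ => t + 1/(n+1:ℝ)) atTop (𝓝[≠] t) := by
    apply tendsto_nhdsWithin_of_tendsto_nhds_of_eventually_within
    · simpa using tendsto_const_nhds.add (tendsto_one_div_add_atTop_nhds_zero_nat (𝕜 := ℝ))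
    · filter_upwards with n
      have : (0:ℝ) < 1/(n+1:ℝ) := by positivity
      simp only [mem_compl_iff, mem_singleton_iff]
      intro hcon
      nlinarith [hcon]
  have h2 := hs.comp h1
  convert h2 using 2 with n
  rw [Function.comp_apply, slope_def_field]
  rw [add_sub_cancel_left]

lemma ftc_aux (f f' : ℝ → ℝ) (a b : ℝ) (hab : a ≤ b) (K : ℝ)
    (hlip : ∀ p ∈ Set.Icc a (b+1), ∀ q ∈ Set.Icc a (b+1), |f p - f q| ≤ K * |p - q|)
    (hcont : Continuous f)
    (hd : ∀ᵐ t ∂(volume : Measure ℝ), HasDerivAt f (f' t) t)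
    (hm : AEStronglyMeasurable f' (volume : Measure ℝ)) :
    ∫ t in a..b, f' t = f b - f a := by
  set h : ℕ → ℝ := fun n => 1/(n+1:ℝ) with hh
  have hpos : ∀ n, 0 < h n := fun n => by positivity
  have hle1 : ∀ n, h n ≤ 1 := by
    intro n
    rw [hh]
    rw [div_le_one (by positivity)]
    linarith [Nat.cast_nonneg (α := ℝ) n]
  have hInt : ∀ c d : ℝ, IntervalIntegrable f volume c d := fun c d =>
    hcont.intervalIntegrable c d
  have key : Tendsto (fun n => ∫ t in Set.Ioc a b, (f (t + h n) - f t) / h n) atTop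
      (𝓝 (∫ t in Set.Ioc a b, f' t)) := by
    apply tendsto_integral_of_dominated_convergence (fun _ => |K|)
    · intro n
      have : Continuous fun t : ℝ => (f (t + h n) - f t) / h n :=
        ((hcont.comp (continuous_id.add continuous_const)).sub hcont).div_const _
      exact this.aestronglyMeasurable.restrict
    · have hfin : (volume : Measure ℝ).restrict (Set.Ioc a b) Set.univ < ⊤ := by
        rw [Measure.restrict_apply_univ]
        exact measure_Ioc_lt_top
      exact integrable_const_iff.mpr (Or.inr ⟨hfin⟩)
    · intro n
      rw [ae_restrict_iff' measurableSet_Ioc]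
      filter_upwards with t ht
      have ht1 : t ∈ Set.Icc a (b+1) := ⟨ht.1.le, by linarith [ht.2]⟩
      have ht2 : t + h n ∈ Set.Icc a (b+1) :=
        ⟨by linarith [ht.1, (hpos n).le], by linarith [ht.2, hle1 n]⟩
      have := hlip _ ht2 _ ht1
      rw [Real.norm_eq_abs, abs_div, abs_of_pos (hpos n), div_le_iff₀ (hpos n)]
      calc |f (t + h n) - f t| ≤ K * |t + h n - t| := this
        _ = K * h n := by rw [add_sub_cancel_left, abs_of_pos (hpos n)]
        _ ≤ |K| * h n := by
            have := le_abs_self K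
            nlinarith [(hpos n).le]
    · filter_upwards [ae_restrict_of_ae hd] with t hdt
      exact slope_seq_tendsto hdt
  have hEn : ∀ n, (∫ t in Set.Ioc a b, (f (t + h n) - f t) / h n)
      = ((∫ s in b..(b + h n), f s) - ∫ s in a..(a + h n), f s) / h n := by
    intro n
    rw [← intervalIntegral.integral_of_le hab, intervalIntegral.integral_div]
    congr 1
    have hc2 : Continuous fun t : ℝ => f (t + h n) :=
      hcont.comp (continuous_id.add continuous_const)
    rw [intervalIntegral.integral_sub (hc2.intervalIntegrable _ _) (hInt a b)]
    have hcomp : (∫ t in a..b, f (t + h n)) = ∫ s in (a + h n)..(b + h n), f s :=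
      intervalIntegral.integral_comp_add_right (a := a) (b := b) f (h n)
    rw [hcomp]
    have h1 := intervalIntegral.integral_add_adjacent_intervals (hInt a b) (hInt b (b + h n))
    have h2 := intervalIntegral.integral_add_adjacent_intervals (hInt a (a + h n))
      (hInt (a + h n) (b + h n))
    linarith [h1, h2]
  have hb' : HasDerivAt (fun u => ∫ s in b..u, f s) (f b) b :=
    intervalIntegral.integral_hasDerivAt_right (hInt b b)
      (hcont.stronglyMeasurableAtFilter _ _) hcont.continuousAt
  have ha' : HasDerivAt (fun u => ∫ s in a..u, f s) (f a) a :=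
    intervalIntegral.integral_hasDerivAt_right (hInt a a)
      (hcont.stronglyMeasurableAtFilter _ _) hcont.continuousAt
  have l1 : Tendsto (fun n => (∫ s in b..(b + h n), f s) / h n) atTop (𝓝 (f b)) := by
    have := slope_seq_tendsto hb'
    simpa [hh, intervalIntegral.integral_same] using this
  have l2 : Tendsto (fun n => (∫ s in a..(a + h n), f s) / h n) atTop (𝓝 (f a)) := by
    have := slope_seq_tendsto ha'
    simpa [hh, intervalIntegral.integral_same] using this
  have l3 : Tendsto (fun n => ((∫ s in b..(b + h n), f s) - ∫ s in a..(a + h n), f s) / h n)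
      atTop (𝓝 (f b - f a)) := by
    simpa [sub_div] using l1.sub l2
  rw [intervalIntegral.integral_of_le hab]
  refine tendsto_nhds_unique ?_ l3
  simpa only [hEn] using key

def LipBd (f : ℝ → ℝ) (K M R : ℝ) : Prop :=
  (∀ p ∈ Set.Icc (-R) R, ∀ q ∈ Set.Icc (-R) R, |f p - f q| ≤ K * |p - q|) ∧
  (∀ p ∈ Set.Icc (-R) R, |f p| ≤ M)

lemma ftc0 (f f' : ℝ → ℝ)
    (hlip : ∀ R : ℝ, 0 ≤ R → ∃ K M, LipBd f K M R)
    (hcont : Continuous f)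
    (hd : ∀ᵐ t ∂(volume : Measure ℝ), HasDerivAt f (f' t) t)
    (hm : AEStronglyMeasurable f' (volume : Measure ℝ)) (t : ℝ) :
    ∫ τ in (0:ℝ)..t, f' τ = f t - f 0 := by
  rcases le_or_gt 0 t with ht | ht
  · obtain ⟨K, M, hK', -⟩ := hlip (t + 1) (by linarith)
    have hK : ∀ p ∈ Set.Icc (-(t+1)) (t+1), ∀ q ∈ Set.Icc (-(t+1)) (t+1),
        |f p - f q| ≤ K * |p - q| := hK'
    refine ftc_aux f f' 0 t ht K (fun p hp q hq => hK p ?_ q ?_) hcont hd hm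
    · exact ⟨by linarith [hp.1], hp.2⟩
    · exact ⟨by linarith [hq.1], hq.2⟩
  · obtain ⟨K, M, hK', -⟩ := hlip (-t + 1) (by linarith)
    have hK : ∀ p ∈ Set.Icc (-(-t+1)) (-t+1), ∀ q ∈ Set.Icc (-(-t+1)) (-t+1),
        |f p - f q| ≤ K * |p - q| := hK'
    have := ftc_aux f f' t 0 ht.le K (fun p hp q hq => hK p ?_ q ?_) hcont hd hm
    · rw [intervalIntegral.integral_symm, this]
      ring
    · exact ⟨by linarith [hp.1], by linarith [hp.2]⟩
    · exact ⟨by linarith [hq.1], by linarith [hq.2]⟩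

lemma LipBd.congr {f g : ℝ → ℝ} {K M R : ℝ} (h : LipBd g K M R)
    (e : ∀ s, f s = g s) : LipBd f K M R := by
  constructor
  · intro p hp q hq
    rw [e p, e q]
    exact h.1 p hp q hq
  · intro p hp
    rw [e p]
    exact h.2 p hp

lemma LipBd.add {f g : ℝ → ℝ} {K M K' M' R : ℝ} (hf : LipBd f K M R) (hg : LipBd g K' M' R) :
    LipBd (fun s => f s + g s) (K + K') (M + M') R := by
  constructor
  · intro p hp q hq
    calc |f p + g p - (f q + g q)| ≤ |f p - f q| + |g p - g q| := by
          rw [show f p + g p - (f q + g q) = (f p - f q) + (g p - g q) by ring]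
          exact abs_add_le _ _
      _ ≤ K * |p - q| + K' * |p - q| := add_le_add (hf.1 p hp q hq) (hg.1 p hp q hq)
      _ = (K + K') * |p - q| := by ring
  · intro p hp
    exact (abs_add_le _ _).trans (add_le_add (hf.2 p hp) (hg.2 p hp))

lemma LipBd.mul {f g : ℝ → ℝ} {K M K' M' R : ℝ} (hR : 0 ≤ R)
    (hf : LipBd f K M R) (hg : LipBd g K' M' R) :
    LipBd (fun s => f s * g s) (M * K' + M' * K) (M * M') R := by
  have h0 : (0:ℝ) ∈ Set.Icc (-R) R := ⟨by linarith, hR⟩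
  have hM : 0 ≤ M := (abs_nonneg _).trans (hf.2 0 h0)
  have hM' : 0 ≤ M' := (abs_nonneg _).trans (hg.2 0 h0)
  constructor
  · intro p hp q hq
    have e : f p * g p - f q * g q = f p * (g p - g q) + g q * (f p - f q) := by ring
    calc |f p * g p - f q * g q| ≤ |f p| * |g p - g q| + |g q| * |f p - f q| := by
          rw [e, ← abs_mul, ← abs_mul]; exact abs_add_le _ _
      _ ≤ M * (K' * |p - q|) + M' * (K * |p - q|) := by
          apply add_le_add
          · exact mul_le_mul (hf.2 p hp) (hg.1 p hp q hq) (abs_nonneg _) hM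
          · exact mul_le_mul (hg.2 q hq) (hf.1 p hp q hq) (abs_nonneg _) hM'
      _ = (M * K' + M' * K) * |p - q| := by ring
  · intro p hp
    rw [abs_mul]
    exact mul_le_mul (hf.2 p hp) (hg.2 p hp) (abs_nonneg _) hM

lemma LipBd.const_mul {f : ℝ → ℝ} {K M R : ℝ} (c : ℝ) (hf : LipBd f K M R) :
    LipBd (fun s => c * f s) (|c| * K) (|c| * M) R := by
  constructor
  · intro p hp q hq
    rw [show c * f p - c * f q = c * (f p - f q) by ring, abs_mul, mul_assoc]
    exact mul_le_mul_of_nonneg_left (hf.1 p hp q hq) (abs_nonneg _)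
  · intro p hp
    rw [abs_mul]
    exact mul_le_mul_of_nonneg_left (hf.2 p hp) (abs_nonneg _)

lemma LipBd.of_lipschitz {f : ℝ → ℝ} {K : NNReal} (hf : LipschitzWith K f) (hf0 : f 0 = 0)
    {R : ℝ} (hR : 0 ≤ R) : LipBd f K (K * R) R := by
  have hd : ∀ p q : ℝ, |f p - f q| ≤ K * |p - q| := by
    intro p q
    have := hf.dist_le_mul p q
    rwa [Real.dist_eq, Real.dist_eq] at this
  constructor
  · exact fun p _ q _ => hd p q
  · intro p hp
    have := hd p 0
    rw [hf0, sub_zero, sub_zero] at this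
    have hpR : |p| ≤ R := abs_le.mpr ⟨hp.1, hp.2⟩
    calc |f p| ≤ K * |p| := this
      _ ≤ K * R := by
          exact mul_le_mul_of_nonneg_left hpR (K.coe_nonneg)

theorem cartan_w_formula
    (u₁ u₂ x y z w : ℝ → ℝ)
    (hu₁m : Measurable u₁) (hu₂m : Measurable u₂)
    (hu₁b : ∃ C, ∀ t, |u₁ t| ≤ C) (hu₂b : ∃ C, ∀ t, |u₂ t| ≤ C)
    (hx : ∃ K, LipschitzWith K x) (hy : ∃ K, LipschitzWith K y)
    (hz : ∃ K, LipschitzWith K z) (hw : ∃ K, LipschitzWith K w)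
    (hx0 : x 0 = 0) (hy0 : y 0 = 0) (hz0 : z 0 = 0) (hw0 : w 0 = 0)
    (hx' : ∀ᵐ t ∂(volume : Measure ℝ), HasDerivAt x (u₁ t) t)
    (hy' : ∀ᵐ t ∂(volume : Measure ℝ), HasDerivAt y (u₂ t) t)
    (hz' : ∀ᵐ t ∂(volume : Measure ℝ),
      HasDerivAt z ((x t * u₂ t - y t * u₁ t) / 2) t)
    (hw' : ∀ᵐ t ∂(volume : Measure ℝ),
      HasDerivAt w (-(y t ^ 2 / 12) * u₁ t - (z t - x t * y t / 6) * u₂ t / 2) t) :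
    ∀ t : ℝ, w t = -(x t * y t ^ 2) / 12
      - y t * (∫ τ in (0:ℝ)..t, x τ * u₂ τ) / 2
      + ∫ τ in (0:ℝ)..t, x τ * y τ * u₂ τ := by
  obtain ⟨Kx, hxl⟩ := hx
  obtain ⟨Ky, hyl⟩ := hy
  obtain ⟨Kz, hzl⟩ := hz
  obtain ⟨Kw, hwl⟩ := hw
  have hxc := hxl.continuous
  have hyc := hyl.continuous
  have hzc := hzl.continuous
  have hwc := hwl.continuous
  intro t
  have step1 : (∫ τ in (0:ℝ)..t, x τ * u₂ τ) = x t * y t / 2 + z t := by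
    have e : ∀ s : ℝ, x s * y s / 2 + z s = (1/2) * (x s * y s) + z s := fun s => by ring
    have hres := ftc0 (fun s => x s * y s / 2 + z s) (fun s => x s * u₂ s)
      (fun R hR => by
        have h := (LipBd.const_mul (1/2)
          (LipBd.mul hR (LipBd.of_lipschitz hxl hx0 hR) (LipBd.of_lipschitz hyl hy0 hR))).add
          (LipBd.of_lipschitz hzl hz0 hR)
        exact ⟨_, _, h.congr e⟩)
      (((hxc.mul hyc).div_const 2).add hzc)
      (by
        filter_upwards [hx', hy', hz'] with τ h1 h2 h3
        have hder := ((h1.mul h2).div_const 2).add h3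
        exact hder.congr_deriv (by ring))
      ((hxc.measurable.mul hu₂m).aestronglyMeasurable) t
    rw [hres, hx0, hy0, hz0]
    ring
  have step2 : (∫ τ in (0:ℝ)..t, x τ * y τ * u₂ τ)
      = w t + x t * y t ^ 2 / 3 + y t * z t / 2 := by
    have e : ∀ s : ℝ, w s + x s * y s ^ 2 / 3 + y s * z s / 2
        = (w s + (1/3) * (x s * (y s * y s))) + (1/2) * (y s * z s) := fun s => by ring
    have hres := ftc0 (fun s => w s + x s * y s ^ 2 / 3 + y s * z s / 2)
      (fun s => x s * y s * u₂ s)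
      (fun R hR => by
        have h := ((LipBd.of_lipschitz hwl hw0 hR).add (LipBd.const_mul (1/3)
          (LipBd.mul hR (LipBd.of_lipschitz hxl hx0 hR)
            (LipBd.mul hR (LipBd.of_lipschitz hyl hy0 hR)
              (LipBd.of_lipschitz hyl hy0 hR))))).add
          (LipBd.const_mul (1/2)
            (LipBd.mul hR (LipBd.of_lipschitz hyl hy0 hR) (LipBd.of_lipschitz hzl hz0 hR)))
        exact ⟨_, _, h.congr e⟩)
      ((hwc.add ((hxc.mul (hyc.pow 2)).div_const 3)).add ((hyc.mul hzc).div_const 2))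
      (by
        filter_upwards [hx', hy', hz', hw'] with τ h1 h2 h3 h4
        have hder := (h4.add ((h1.mul (h2.pow 2)).div_const 3)).add
          ((h2.mul h3).div_const 2)
        exact hder.congr_deriv (by simp only [Pi.pow_apply]; ring))
      (((hxc.measurable.mul hyc.measurable).mul hu₂m).aestronglyMeasurable) t
    rw [hres, hx0, hy0, hz0, hw0]
    ring
  rw [step1, step2]
  ring
end

section
/- Under the hypotheses of the full Hamiltonian system on the Cartan group (state equations x'=u₁, y'=u₂, z'=½(xu₂−yu₁), initial values 0, and adjoint equations ψ₁' = (1/12)ψ₄yu₁ − (½ψ₃ + (1/6)ψ₄x + (1/12)ψ₅y)u₂, ψ₂' = (½ψ₃ + (1/12)ψ₄x + (1/6)ψ₅y)u₁ − (1/12)ψ₅xu₂, ψ₃' = ½ψ₄u₁ + ½ψ₅u₂, ψ₄'=ψ₅'=0, with ψᵢ(0)=φᵢ), the solutions satisfy ψ₁(t) = φ₁ − ½φ₃y − (1/6)φ₅y² − (1/6)φ₄xy − ½φ₄z and ψ₂(t) = φ₂ + ½φ₃x + (1/6)φ₄x² + (1/6)φ₅xy − ½φ₅z for all t. -/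
open MeasureTheory Filter Set Topology intervalIntegral

def MyLocLip (f : ℝ → ℝ) : Prop :=
  ∀ R : ℝ, ∃ C : ℝ, ∀ s t : ℝ, |s| ≤ R → |t| ≤ R → |f s - f t| ≤ C * |s - t|

lemma mll_of_lip {K : NNReal} {f : ℝ → ℝ} (hf : LipschitzWith K f) : MyLocLip f := by
  intro R
  exact ⟨K, fun s t _ _ => by
    simpa [Real.dist_eq] using hf.dist_le_mul s t⟩

lemma mll_add {f g : ℝ → ℝ} (hf : MyLocLip f) (hg : MyLocLip g) :
    MyLocLip (fun t => f t + g t) := by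
  intro R
  obtain ⟨C, hC⟩ := hf R
  obtain ⟨D, hD⟩ := hg R
  refine ⟨C + D, fun s t hs ht => ?_⟩
  have h1 := hC s t hs ht
  have h2 := hD s t hs ht
  calc |f s + g s - (f t + g t)| ≤ |f s - f t| + |g s - g t| := by
        rw [show f s + g s - (f t + g t) = (f s - f t) + (g s - g t) by ring]
        exact abs_add_le _ _
    _ ≤ C * |s - t| + D * |s - t| := add_le_add h1 h2
    _ = (C + D) * |s - t| := by ring

lemma mll_sub {f g : ℝ → ℝ} (hf : MyLocLip f) (hg : MyLocLip g) :
    MyLocLip (fun t => f t - g t) := by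
  intro R
  obtain ⟨C, hC⟩ := hf R
  obtain ⟨D, hD⟩ := hg R
  refine ⟨C + D, fun s t hs ht => ?_⟩
  have h1 := hC s t hs ht
  have h2 := hD s t hs ht
  calc |f s - g s - (f t - g t)| ≤ |f s - f t| + |g s - g t| := by
        rw [show f s - g s - (f t - g t) = (f s - f t) - (g s - g t) by ring]
        exact abs_sub _ _
    _ ≤ C * |s - t| + D * |s - t| := add_le_add h1 h2
    _ = (C + D) * |s - t| := by ring

lemma mll_const_mul {f : ℝ → ℝ} (hf : MyLocLip f) (c : ℝ) :
    MyLocLip (fun t => c * f t) := by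
  intro R
  obtain ⟨C, hC⟩ := hf R
  refine ⟨|c| * C, fun s t hs ht => ?_⟩
  calc |c * f s - c * f t| = |c| * |f s - f t| := by rw [← abs_mul]; ring_nf
    _ ≤ |c| * (C * |s - t|) := by
        exact mul_le_mul_of_nonneg_left (hC s t hs ht) (abs_nonneg c)
    _ = |c| * C * |s - t| := by ring

lemma mll_div_const {f : ℝ → ℝ} (hf : MyLocLip f) (c : ℝ) :
    MyLocLip (fun t => f t / c) := by
  intro R
  obtain ⟨C, hC⟩ := hf R
  refine ⟨C / |c|, fun s t hs ht => ?_⟩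
  rcases eq_or_ne c 0 with rfl | hc
  · simp
  · rw [div_sub_div_same, abs_div, div_le_iff₀ (abs_pos.2 hc)]
    calc |f s - f t| ≤ C * |s - t| := hC s t hs ht
      _ = C / |c| * |s - t| * |c| := by field_simp
lemma mll_mul_lip {f g : ℝ → ℝ} {Kf Kg : NNReal}
    (hf : LipschitzWith Kf f) (hg : LipschitzWith Kg g) :
    MyLocLip (fun t => f t * g t) := by
  intro R
  have hlf : ∀ s t : ℝ, |f s - f t| ≤ Kf * |s - t| := fun s t => by
    simpa [Real.dist_eq] using hf.dist_le_mul s t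
  have hlg : ∀ s t : ℝ, |g s - g t| ≤ Kg * |s - t| := fun s t => by
    simpa [Real.dist_eq] using hg.dist_le_mul s t
  refine ⟨(|f 0| + Kf * R) * Kg + (|g 0| + Kg * R) * Kf, fun s t hs ht => ?_⟩
  have hbf : |f s| ≤ |f 0| + Kf * R := by
    have h1 := hlf s 0
    have h2 : |f s| - |f 0| ≤ |f s - f 0| := abs_sub_abs_le_abs_sub _ _
    have h3 : (Kf : ℝ) * |s - 0| ≤ Kf * R := by
      apply mul_le_mul_of_nonneg_left (by simpa using hs) Kf.coe_nonneg
    linarith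
  have hbg : |g t| ≤ |g 0| + Kg * R := by
    have h1 := hlg t 0
    have h2 : |g t| - |g 0| ≤ |g t - g 0| := abs_sub_abs_le_abs_sub _ _
    have h3 : (Kg : ℝ) * |t - 0| ≤ Kg * R := by
      apply mul_le_mul_of_nonneg_left (by simpa using ht) Kg.coe_nonneg
    linarith
  calc |f s * g s - f t * g t|
      = |f s * (g s - g t) + (f s - f t) * g t| := by ring_nf
    _ ≤ |f s * (g s - g t)| + |(f s - f t) * g t| := abs_add_le _ _
    _ = |f s| * |g s - g t| + |f s - f t| * |g t| := by rw [abs_mul, abs_mul]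
    _ ≤ (|f 0| + Kf * R) * (Kg * |s - t|) + (Kf * |s - t|) * (|g 0| + Kg * R) := by
        have hR : (0:ℝ) ≤ R := (abs_nonneg s).trans hs
        have p1 : (0:ℝ) ≤ |f 0| + Kf * R := by positivity
        have p2 : (0:ℝ) ≤ |g 0| + Kg * R := by positivity
        exact add_le_add
          (mul_le_mul hbf (hlg s t) (abs_nonneg _) p1)
          (mul_le_mul (hlf s t) hbg (abs_nonneg _) (by positivity))
    _ = ((|f 0| + Kf * R) * Kg + (|g 0| + Kg * R) * Kf) * |s - t| := by ring

lemma const_of_mll_ae_deriv_zero (f : ℝ → ℝ) (hl : MyLocLip f) (hc : Continuous f)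
    (hd : ∀ᵐ t ∂(volume : Measure ℝ), HasDerivAt f 0 t) : ∀ t, f t = f 0 := by
  suffices H : ∀ a b : ℝ, a ≤ b → f b = f a by
    intro t
    rcases le_total 0 t with h | h
    · exact H 0 t h
    · exact (H t 0 h).symm
  intro a b hab
  set F : ℝ → ℝ := fun t => ∫ x in (0:ℝ)..t, f x with hF
  have hFd : ∀ t, HasDerivAt F (f t) t := fun t =>
    intervalIntegral.integral_hasDerivAt_right (hc.intervalIntegrable 0 t)
      hc.stronglyMeasurable.stronglyMeasurableAtFilter hc.continuousAt
  set h : ℕ → ℝ := fun n => 1 / (n + 1 : ℝ) with hh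
  have hpos : ∀ n, 0 < h n := fun n => by positivity
  have hto : Tendsto h atTop (𝓝 0) := tendsto_one_div_add_atTop_nhds_zero_nat
  have hle1 : ∀ n, h n ≤ 1 := fun n => by
    rw [hh]
    rw [div_le_one (by positivity)]
    have : (0:ℝ) ≤ (n:ℝ) := Nat.cast_nonneg n
    linarith
  -- slope convergence helper
  have slope_lim : ∀ (c : ℝ) (g : ℝ → ℝ) (d : ℝ), HasDerivAt g d c →
      Tendsto (fun n => (g (c + h n) - g c) / h n) atTop (𝓝 d) := by
    intro c g d hg
    have h1 : Tendsto (fun n => c + h n) atTop (𝓝[≠] c) := by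
      apply tendsto_nhdsWithin_of_tendsto_nhds_of_eventually_within
      · simpa using tendsto_const_nhds.add hto
      · exact Eventually.of_forall fun n => (lt_add_of_pos_right c (hpos n)).ne'
    have h2 := (hasDerivAt_iff_tendsto_slope.mp hg).comp h1
    refine h2.congr fun n => ?_
    simp only [Function.comp_apply, slope_def_field]
    rw [add_sub_cancel_left]
  -- Claim A
  have claimA : Tendsto (fun n => ((F (b + h n) - F b) - (F (a + h n) - F a)) / h n)
      atTop (𝓝 (f b - f a)) := by
    have := (slope_lim b F (f b) (hFd b)).sub (slope_lim a F (f a) (hFd a))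
    refine this.congr fun n => ?_
    rw [← sub_div]
  -- equality of the integral with the F-expression
  have hGeq : ∀ n, (∫ t in a..b, (f (t + h n) - f t) / h n) =
      ((F (b + h n) - F b) - (F (a + h n) - F a)) / h n := by
    intro n
    have hint : ∀ c d : ℝ, IntervalIntegrable f volume c d := fun c d =>
      hc.intervalIntegrable c d
    have hint2 : IntervalIntegrable (fun t => f (t + h n)) volume a b :=
      (hc.comp (continuous_id.add continuous_const)).intervalIntegrable a b
    have e2 : ∀ c d : ℝ, (∫ t in c..d, f t) = F d - F c := fun c d =>
      (intervalIntegral.integral_interval_sub_left (hint 0 d) (hint 0 c)).symm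
    rw [intervalIntegral.integral_div, intervalIntegral.integral_sub hint2 (hint a b),
      intervalIntegral.integral_comp_add_right f (h n), e2 (a + h n) (b + h n), e2 a b]
    ring
  -- Claim B via dominated convergence
  obtain ⟨C, hC⟩ := hl (max |a| |b| + 1)
  have claimB : Tendsto (fun n => ∫ t in a..b, (f (t + h n) - f t) / h n) atTop (𝓝 0) := by
    have heq : ∀ n, (∫ t in a..b, (f (t + h n) - f t) / h n)
        = ∫ t in Ioc a b, (f (t + h n) - f t) / h n ∂volume := fun n =>
      intervalIntegral.integral_of_le hab
    have key : Tendsto (fun n => ∫ t in Ioc a b, (f (t + h n) - f t) / h n ∂volume)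
        atTop (𝓝 (∫ _ in Ioc a b, (0:ℝ) ∂volume)) := by
      apply tendsto_integral_of_dominated_convergence (fun _ => C)
      · intro n
        exact ((hc.comp (continuous_id.add continuous_const)).sub hc).div_const
          (h n) |>.aestronglyMeasurable
      · exact (integrableOn_const measure_Ioc_lt_top.ne)
      · intro n
        filter_upwards [ae_restrict_mem measurableSet_Ioc] with t ht
        have hta : |t| ≤ max |a| |b| := by
          rw [abs_le]
          constructor
          · have := neg_abs_le a
            have := le_max_left |a| |b|
            linarith [ht.1]
          · have := le_abs_self b
            have := le_max_right |a| |b|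
            linarith [ht.2]
        have h1 : |t| ≤ max |a| |b| + 1 := by linarith
        have h2 : |t + h n| ≤ max |a| |b| + 1 := by
          calc |t + h n| ≤ |t| + |h n| := abs_add_le _ _
            _ ≤ max |a| |b| + 1 := by
                have := abs_of_pos (hpos n)
                linarith [hle1 n]
        have h3 := hC (t + h n) t h2 h1
        rw [add_sub_cancel_left, abs_of_pos (hpos n)] at h3
        rw [Real.norm_eq_abs, abs_div, abs_of_pos (hpos n), div_le_iff₀ (hpos n)]
        linarith
      · filter_upwards [ae_restrict_of_ae hd] with t ht
        exact slope_lim t f 0 ht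
    simp only [MeasureTheory.integral_zero] at key
    simpa only [← heq] using key
  have hAB := tendsto_nhds_unique ((claimA.congr fun n => (hGeq n).symm)) claimB
  linarith [hAB]

theorem cartan_adjoint_12
    (u₁ u₂ x y z ψ₁ ψ₂ ψ₃ ψ₄ ψ₅ : ℝ → ℝ) (φ₁ φ₂ φ₃ φ₄ φ₅ : ℝ)
    (hu₁m : Measurable u₁) (hu₂m : Measurable u₂)
    (hu₁b : ∃ C, ∀ t, |u₁ t| ≤ C) (hu₂b : ∃ C, ∀ t, |u₂ t| ≤ C)
    (hx : ∃ K, LipschitzWith K x) (hy : ∃ K, LipschitzWith K y)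
    (hz : ∃ K, LipschitzWith K z)
    (hψ₁ : ∃ K, LipschitzWith K ψ₁) (hψ₂ : ∃ K, LipschitzWith K ψ₂)
    (hψ₃ : ∃ K, LipschitzWith K ψ₃) (hψ₄ : ∃ K, LipschitzWith K ψ₄)
    (hψ₅ : ∃ K, LipschitzWith K ψ₅)
    (hx0 : x 0 = 0) (hy0 : y 0 = 0) (hz0 : z 0 = 0)
    (hψ10 : ψ₁ 0 = φ₁) (hψ20 : ψ₂ 0 = φ₂) (hψ30 : ψ₃ 0 = φ₃)
    (hψ40 : ψ₄ 0 = φ₄) (hψ50 : ψ₅ 0 = φ₅)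
    (hx' : ∀ᵐ t ∂(volume : Measure ℝ), HasDerivAt x (u₁ t) t)
    (hy' : ∀ᵐ t ∂(volume : Measure ℝ), HasDerivAt y (u₂ t) t)
    (hz' : ∀ᵐ t ∂(volume : Measure ℝ),
      HasDerivAt z ((x t * u₂ t - y t * u₁ t) / 2) t)
    (hψ₁' : ∀ᵐ t ∂(volume : Measure ℝ),
      HasDerivAt ψ₁ (ψ₄ t * y t * u₁ t / 12
        - (ψ₃ t / 2 + ψ₄ t * x t / 6 + ψ₅ t * y t / 12) * u₂ t) t)
    (hψ₂' : ∀ᵐ t ∂(volume : Measure ℝ),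
      HasDerivAt ψ₂ ((ψ₃ t / 2 + ψ₄ t * x t / 12 + ψ₅ t * y t / 6) * u₁ t
        - ψ₅ t * x t * u₂ t / 12) t)
    (hψ₃' : ∀ᵐ t ∂(volume : Measure ℝ),
      HasDerivAt ψ₃ (ψ₄ t * u₁ t / 2 + ψ₅ t * u₂ t / 2) t)
    (hψ₄' : ∀ᵐ t ∂(volume : Measure ℝ), HasDerivAt ψ₄ 0 t)
    (hψ₅' : ∀ᵐ t ∂(volume : Measure ℝ), HasDerivAt ψ₅ 0 t) :
    (∀ t : ℝ, ψ₁ t = φ₁ - φ₃ * y t / 2 - φ₅ * y t ^ 2 / 6 - φ₄ * x t * y t / 6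
        - φ₄ * z t / 2) ∧
    (∀ t : ℝ, ψ₂ t = φ₂ + φ₃ * x t / 2 + φ₄ * x t ^ 2 / 6 + φ₅ * x t * y t / 6
        - φ₅ * z t / 2) := by
  obtain ⟨Kx, hKx⟩ := hx
  obtain ⟨Ky, hKy⟩ := hy
  obtain ⟨Kz, hKz⟩ := hz
  obtain ⟨K₁, hK₁⟩ := hψ₁
  obtain ⟨K₂, hK₂⟩ := hψ₂
  obtain ⟨K₃, hK₃⟩ := hψ₃
  obtain ⟨K₄, hK₄⟩ := hψ₄
  obtain ⟨K₅, hK₅⟩ := hψ₅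
  have cx := hKx.continuous
  have cy := hKy.continuous
  have cz := hKz.continuous
  have c1 := hK₁.continuous
  have c2 := hK₂.continuous
  have c3 := hK₃.continuous
  -- ψ₄ and ψ₅ are constant
  have h4 : ∀ t, ψ₄ t = φ₄ := by
    intro t
    rw [← hψ40]
    exact const_of_mll_ae_deriv_zero ψ₄ (mll_of_lip hK₄) hK₄.continuous hψ₄' t
  have h5 : ∀ t, ψ₅ t = φ₅ := by
    intro t
    rw [← hψ50]
    exact const_of_mll_ae_deriv_zero ψ₅ (mll_of_lip hK₅) hK₅.continuous hψ₅' t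
  -- ψ₃
  have h3 : ∀ t, ψ₃ t = φ₃ + φ₄ * x t / 2 + φ₅ * y t / 2 := by
    have mll3 : MyLocLip (fun s => ψ₃ s - (φ₄ * x s / 2 + φ₅ * y s / 2)) :=
      mll_sub (mll_of_lip hK₃)
        (mll_add (mll_div_const (mll_const_mul (mll_of_lip hKx) φ₄) 2)
          (mll_div_const (mll_const_mul (mll_of_lip hKy) φ₅) 2))
    have cont3 : Continuous (fun s => ψ₃ s - (φ₄ * x s / 2 + φ₅ * y s / 2)) := by
      fun_prop
    have hd3 : ∀ᵐ t ∂(volume : Measure ℝ),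
        HasDerivAt (fun s => ψ₃ s - (φ₄ * x s / 2 + φ₅ * y s / 2)) 0 t := by
      filter_upwards [hψ₃', hx', hy'] with t h3t hxt hyt
      have H := h3t.sub (((hxt.const_mul φ₄).div_const 2).add
        ((hyt.const_mul φ₅).div_const 2))
      refine H.congr_deriv ?_
      rw [h4 t, h5 t]
      ring
    have e3 := const_of_mll_ae_deriv_zero _ mll3 cont3 hd3
    intro t
    have := e3 t
    rw [hx0, hy0, hψ30] at this
    linarith
  constructor
  · -- ψ₁
    have mll1 : MyLocLip (fun s => ψ₁ s + (φ₃ * y s / 2 + φ₅ * (y s * y s) / 6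
        + φ₄ * (x s * y s) / 6 + φ₄ * z s / 2)) :=
      mll_add (mll_of_lip hK₁)
        (mll_add (mll_add (mll_add
          (mll_div_const (mll_const_mul (mll_of_lip hKy) φ₃) 2)
          (mll_div_const (mll_const_mul (mll_mul_lip hKy hKy) φ₅) 6))
          (mll_div_const (mll_const_mul (mll_mul_lip hKx hKy) φ₄) 6))
          (mll_div_const (mll_const_mul (mll_of_lip hKz) φ₄) 2))
    have cont1 : Continuous (fun s => ψ₁ s + (φ₃ * y s / 2 + φ₅ * (y s * y s) / 6
        + φ₄ * (x s * y s) / 6 + φ₄ * z s / 2)) := by fun_prop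
    have hd1 : ∀ᵐ t ∂(volume : Measure ℝ),
        HasDerivAt (fun s => ψ₁ s + (φ₃ * y s / 2 + φ₅ * (y s * y s) / 6
          + φ₄ * (x s * y s) / 6 + φ₄ * z s / 2)) 0 t := by
      filter_upwards [hψ₁', hx', hy', hz'] with t h1t hxt hyt hzt
      have H := h1t.add ((((hyt.const_mul φ₃).div_const 2).add
        (((hyt.mul hyt).const_mul φ₅).div_const 6)).add
        (((hxt.mul hyt).const_mul φ₄).div_const 6) |>.add
        ((hzt.const_mul φ₄).div_const 2))
      refine H.congr_deriv ?_
      rw [h3 t, h4 t, h5 t]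
      ring
    have e1 := const_of_mll_ae_deriv_zero _ mll1 cont1 hd1
    intro t
    have := e1 t
    rw [hx0, hy0, hz0, hψ10] at this
    linear_combination this
  · -- ψ₂
    have mll2 : MyLocLip (fun s => ψ₂ s - (φ₃ * x s / 2 + φ₄ * (x s * x s) / 6
        + φ₅ * (x s * y s) / 6 - φ₅ * z s / 2)) :=
      mll_sub (mll_of_lip hK₂)
        (mll_sub (mll_add (mll_add
          (mll_div_const (mll_const_mul (mll_of_lip hKx) φ₃) 2)
          (mll_div_const (mll_const_mul (mll_mul_lip hKx hKx) φ₄) 6))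
          (mll_div_const (mll_const_mul (mll_mul_lip hKx hKy) φ₅) 6))
          (mll_div_const (mll_const_mul (mll_of_lip hKz) φ₅) 2))
    have cont2 : Continuous (fun s => ψ₂ s - (φ₃ * x s / 2 + φ₄ * (x s * x s) / 6
        + φ₅ * (x s * y s) / 6 - φ₅ * z s / 2)) := by fun_prop
    have hd2 : ∀ᵐ t ∂(volume : Measure ℝ),
        HasDerivAt (fun s => ψ₂ s - (φ₃ * x s / 2 + φ₄ * (x s * x s) / 6
          + φ₅ * (x s * y s) / 6 - φ₅ * z s / 2)) 0 t := by
      filter_upwards [hψ₂', hx', hy', hz'] with t h2t hxt hyt hzt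
      have H := h2t.sub ((((hxt.const_mul φ₃).div_const 2).add
        (((hxt.mul hxt).const_mul φ₄).div_const 6)).add
        (((hxt.mul hyt).const_mul φ₅).div_const 6) |>.sub
        ((hzt.const_mul φ₅).div_const 2))
      refine H.congr_deriv ?_
      rw [h3 t, h4 t, h5 t]
      ring
    have e2 := const_of_mll_ae_deriv_zero _ mll2 cont2 hd2
    intro t
    have := e2 t
    rw [hx0, hy0, hz0, hψ20] at this
    linear_combination this
end

section
/- Suppose along a trajectory of the Cartan horizontal system h₁(t) = h₂(t) = 0 for all t (abnormal case), with φ₁=φ₂=φ₃=0, φ₄ ≠ 0, φ₅ = 0, x(0)=y(0)=z(0)=v(0)=w(0)=0, and (u₁(t),u₂(t)) ≠ (0,0) a.e. Then x(t) ≡ 0, z(t) ≡ 0, v(t) ≡ 0, w(t) ≡ 0 and u₁(t) = 0 a.e.; so y(t) = ∫₀ᵗ u₂ dτ and the extremal lies on the one-parameter subgroup through Y. -/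
open MeasureTheory intervalIntegral

section CartanAux
open Filter Topology


lemma seq_tendsto (c : ℝ) :
    Tendsto (fun n : ℕ => c + 1 / ((n : ℝ) + 1)) atTop (𝓝[≠] c) := by
  have h0 : Tendsto (fun n : ℕ => c + 1 / ((n : ℝ) + 1)) atTop (𝓝 c) := by
    simpa using tendsto_const_nhds.add (tendsto_one_div_add_atTop_nhds_zero_nat : Tendsto (fun n : ℕ => 1 / ((n : ℝ) + 1)) atTop (𝓝 0))
  refine tendsto_nhdsWithin_of_tendsto_nhds_of_eventually_within _ h0 ?_
  filter_upwards [] with n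
  have : (0:ℝ) < 1 / ((n : ℝ) + 1) := by positivity
  simp only [Set.mem_compl_iff, Set.mem_singleton_iff]
  intro h
  nlinarith [this]

lemma prim_tendsto {f : ℝ → ℝ} (hf : Continuous f) (c : ℝ) :
    Tendsto (fun n : ℕ => (∫ t in c..(c + 1 / ((n : ℝ) + 1)), f t) * ((n : ℝ) + 1))
      atTop (𝓝 (f c)) := by
  have hD : HasDerivAt (fun s => ∫ t in c..s, f t) (f c) c :=
    intervalIntegral.integral_hasDerivAt_right (hf.intervalIntegrable _ _)
      (hf.stronglyMeasurable.stronglyMeasurableAtFilter) hf.continuousAt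
  have hs := (hasDerivAt_iff_tendsto_slope.1 hD).comp (seq_tendsto c)
  refine hs.congr fun n => ?_
  have hn : ((n : ℝ) + 1) ≠ 0 := by positivity
  simp only [Function.comp_apply, slope_def_field, intervalIntegral.integral_same,
    add_sub_cancel_left, sub_zero, div_div_eq_mul_div, div_one]

lemma ftc_lip {f g : ℝ → ℝ} {K : NNReal} (hf : LipschitzWith K f)
    (hd : ∀ᵐ t ∂(volume : Measure ℝ), HasDerivAt f (g t) t)
    (hgm : Measurable g) (a b : ℝ) :
    f b - f a = ∫ t in a..b, g t := by
  have hcont : Continuous f := hf.continuous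
  set F : ℕ → ℝ → ℝ := fun n t => (f (t + 1 / ((n : ℝ) + 1)) - f t) * ((n : ℝ) + 1) with hF
  -- pointwise a.e. convergence of difference quotients
  have hlim : ∀ᵐ t ∂(volume : Measure ℝ), Tendsto (fun n => F n t) atTop (𝓝 (g t)) := by
    filter_upwards [hd] with t ht
    have hs := (hasDerivAt_iff_tendsto_slope.1 ht).comp (seq_tendsto t)
    refine hs.congr fun n => ?_
    simp only [Function.comp_apply, slope_def_field, add_sub_cancel_left,
      div_div_eq_mul_div, div_one, hF]
  -- uniform bound
  have hbound : ∀ n t, |F n t| ≤ (K : ℝ) := by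
    intro n t
    have h1 : |f (t + 1 / ((n : ℝ) + 1)) - f t| ≤ K * |1 / ((n : ℝ) + 1)| := by
      simpa [Real.dist_eq, add_sub_cancel_left, abs_inv] using hf.dist_le_mul (t + 1 / ((n : ℝ) + 1)) t
    have hn : (0:ℝ) < (n : ℝ) + 1 := by positivity
    rw [abs_mul, abs_of_pos hn]
    calc |f (t + 1 / ((n : ℝ) + 1)) - f t| * ((n : ℝ) + 1)
        ≤ (K * |1 / ((n : ℝ) + 1)|) * ((n : ℝ) + 1) := by
          exact mul_le_mul_of_nonneg_right h1 hn.le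
      _ = (K : ℝ) := by
          rw [abs_of_pos (by positivity : (0:ℝ) < 1 / ((n : ℝ) + 1))]
          field_simp
  -- dominated convergence
  have hDC : Tendsto (fun n => ∫ t in a..b, F n t) atTop (𝓝 (∫ t in a..b, g t)) := by
    apply intervalIntegral.tendsto_integral_filter_of_dominated_convergence (fun _ => (K : ℝ))
    · filter_upwards [] with n
      exact (((hcont.comp (continuous_id.add continuous_const)).sub hcont).mul
        continuous_const).aestronglyMeasurable.restrict
    · filter_upwards [] with n
      filter_upwards [] with t _
      simpa [Real.norm_eq_abs] using hbound n t
    · exact intervalIntegrable_const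
    · filter_upwards [hlim] with t ht _ using ht
  -- the integral of F n computes explicitly
  have hI : ∀ n : ℕ, ∫ t in a..b, F n t =
      (∫ t in b..(b + 1 / ((n : ℝ) + 1)), f t) * ((n : ℝ) + 1)
      - (∫ t in a..(a + 1 / ((n : ℝ) + 1)), f t) * ((n : ℝ) + 1) := by
    intro n
    have hint : ∀ c d : ℝ, IntervalIntegrable f volume c d := fun c d =>
      hcont.intervalIntegrable c d
    have e1 : ∫ t in a..b, f (t + 1 / ((n : ℝ) + 1)) =
        ∫ t in (a + 1 / ((n : ℝ) + 1))..(b + 1 / ((n : ℝ) + 1)), f t :=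
      intervalIntegral.integral_comp_add_right f _
    have e2 : (∫ t in a..(a + 1 / ((n : ℝ) + 1)), f t)
        + ∫ t in (a + 1 / ((n : ℝ) + 1))..(b + 1 / ((n : ℝ) + 1)), f t
        = ∫ t in a..(b + 1 / ((n : ℝ) + 1)), f t :=
      intervalIntegral.integral_add_adjacent_intervals (hint _ _) (hint _ _)
    have e3 : (∫ t in a..b, f t) + ∫ t in b..(b + 1 / ((n : ℝ) + 1)), f t
        = ∫ t in a..(b + 1 / ((n : ℝ) + 1)), f t :=
      intervalIntegral.integral_add_adjacent_intervals (hint _ _) (hint _ _)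
    have hi1 : IntervalIntegrable (fun t => f (t + 1 / ((n : ℝ) + 1))) volume a b :=
      (hcont.comp (by continuity)).intervalIntegrable _ _
    have e4 : ∫ t in a..b, F n t =
        ((∫ t in a..b, f (t + 1 / ((n : ℝ) + 1))) - ∫ t in a..b, f t) * ((n : ℝ) + 1) := by
      rw [← intervalIntegral.integral_sub hi1 (hint _ _), ← intervalIntegral.integral_mul_const]
    rw [e4, e1]
    nlinarith [e2, e3]
  -- limits of the right-hand side
  have hR : Tendsto (fun n : ℕ => (∫ t in b..(b + 1 / ((n : ℝ) + 1)), f t) * ((n : ℝ) + 1)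
      - (∫ t in a..(a + 1 / ((n : ℝ) + 1)), f t) * ((n : ℝ) + 1)) atTop (𝓝 (f b - f a)) :=
    (prim_tendsto hcont b).sub (prim_tendsto hcont a)
  have : Tendsto (fun n => ∫ t in a..b, F n t) atTop (𝓝 (f b - f a)) := by
    simpa only [hI] using hR
  exact tendsto_nhds_unique this hDC

end CartanAux

theorem cartan_abnormal_case
    (u₁ u₂ x y z v w : ℝ → ℝ) (φ₁ φ₂ φ₃ φ₄ φ₅ : ℝ)
    (hu₁m : Measurable u₁) (hu₂m : Measurable u₂)
    (hu₁b : ∃ C, ∀ t, |u₁ t| ≤ C) (hu₂b : ∃ C, ∀ t, |u₂ t| ≤ C)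
    (hx : ∃ K, LipschitzWith K x) (hy : ∃ K, LipschitzWith K y)
    (hz : ∃ K, LipschitzWith K z) (hv : ∃ K, LipschitzWith K v)
    (hw : ∃ K, LipschitzWith K w)
    (hx0 : x 0 = 0) (hy0 : y 0 = 0) (hz0 : z 0 = 0) (hv0 : v 0 = 0) (hw0 : w 0 = 0)
    (hx' : ∀ᵐ t ∂(volume : Measure ℝ), HasDerivAt x (u₁ t) t)
    (hy' : ∀ᵐ t ∂(volume : Measure ℝ), HasDerivAt y (u₂ t) t)
    (hz' : ∀ᵐ t ∂(volume : Measure ℝ),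
      HasDerivAt z ((x t * u₂ t - y t * u₁ t) / 2) t)
    (hv' : ∀ᵐ t ∂(volume : Measure ℝ),
      HasDerivAt v (-(z t + x t * y t / 6) * u₁ t / 2 + x t ^ 2 / 12 * u₂ t) t)
    (hw' : ∀ᵐ t ∂(volume : Measure ℝ),
      HasDerivAt w (-(y t ^ 2 / 12) * u₁ t - (z t - x t * y t / 6) * u₂ t / 2) t)
    (hφ₁ : φ₁ = 0) (hφ₂ : φ₂ = 0) (hφ₃ : φ₃ = 0) (hφ₄ : φ₄ ≠ 0) (hφ₅ : φ₅ = 0)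
    (habn₁ : ∀ t, φ₁ - (φ₃ + φ₄ * x t / 2 + φ₅ * y t / 2) * y t - φ₄ * z t = 0)
    (habn₂ : ∀ t, φ₂ + (φ₃ + φ₄ * x t / 2 + φ₅ * y t / 2) * x t - φ₅ * z t = 0)
    (hu : ∀ᵐ t ∂(volume : Measure ℝ), (u₁ t, u₂ t) ≠ (0, 0)) :
    (∀ t, x t = 0) ∧ (∀ t, z t = 0) ∧ (∀ t, v t = 0) ∧ (∀ t, w t = 0) ∧
    (∀ᵐ t ∂(volume : Measure ℝ), u₁ t = 0) ∧
    (∀ t, y t = ∫ τ in (0:ℝ)..t, u₂ τ) := by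
  subst hφ₁ hφ₂ hφ₃ hφ₅
  -- x ≡ 0
  have hX : ∀ t, x t = 0 := by
    intro t
    have h := habn₂ t
    have h2 : φ₄ * (x t * x t) = 0 := by ring_nf; ring_nf at h; linarith
    have := (mul_eq_zero.1 h2).resolve_left hφ₄
    exact (mul_self_eq_zero).1 this
  -- z ≡ 0
  have hZ : ∀ t, z t = 0 := by
    intro t
    have h := habn₁ t
    rw [hX t] at h
    have h2 : φ₄ * z t = 0 := by linarith
    exact (mul_eq_zero.1 h2).resolve_left hφ₄
  -- u₁ = 0 a.e.
  have hxc : x = fun _ => (0:ℝ) := funext hX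
  have hU₁ : ∀ᵐ t ∂(volume : Measure ℝ), u₁ t = 0 := by
    filter_upwards [hx'] with t ht
    have h0 : HasDerivAt x 0 t := by rw [hxc]; exact hasDerivAt_const t 0
    exact ht.unique h0
  -- v ≡ 0
  obtain ⟨Kv, hKv⟩ := hv
  have hV : ∀ t, v t = 0 := by
    intro t
    have hd : ∀ᵐ s ∂(volume : Measure ℝ), HasDerivAt v ((fun _ => (0:ℝ)) s) s := by
      filter_upwards [hv'] with s hs
      simpa [hX s, hZ s] using hs
    have := ftc_lip hKv hd measurable_const 0 t
    simpa [hv0] using this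
  -- w ≡ 0
  obtain ⟨Kw, hKw⟩ := hw
  have hW : ∀ t, w t = 0 := by
    intro t
    have hd : ∀ᵐ s ∂(volume : Measure ℝ), HasDerivAt w ((fun _ => (0:ℝ)) s) s := by
      filter_upwards [hw', hU₁] with s hs h1
      simpa [hX s, hZ s, h1] using hs
    have := ftc_lip hKw hd measurable_const 0 t
    simpa [hw0] using this
  -- y t = ∫ u₂
  obtain ⟨Ky, hKy⟩ := hy
  have hY : ∀ t, y t = ∫ τ in (0:ℝ)..t, u₂ τ := by
    intro t
    have := ftc_lip hKy hy' hu₂m 0 t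
    simpa [hy0] using this
  exact ⟨hX, hZ, hV, hW, hU₁, hY⟩
end
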